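/- arXiv:2005.10022 — 4 statements merged into one kernel-verified Lean document; each statement's English description precedes it below -/
import Mathlib

section
/- Let φ(t,s) = 4 − s² for 0 ≤ s ≤ t < √3. Then (φ − s·φ_s)·(φ + (t−s)·φ_s) + s(t−s)·φ·φ_ss > 0 for all 0 ≤ s ≤ t < √3, where φ_s = −2s and φ_ss = −2; i.e., (4+s²)(4+s²−2ts+2s²) − 2s(t−s)(4−s²) = 16 − s⁴ + 16s² − 16st > 0. -/
theorem wrona_pseudoconvex (t s : ℝ) (h0 : 0 ≤ s) (hst : s ≤ t)
    (ht : t < Real.sqrt 3) :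
    let φ := 4 - s ^ 2
    let φs := -2 * s
    let φss : ℝ := -2
    (φ - s * φs) * (φ + (t - s) * φs) + s * (t - s) * φ * φss
        = 16 - s ^ 4 + 16 * s ^ 2 - 16 * s * t
      ∧ (φ - s * φs) * (φ + (t - s) * φs) + s * (t - s) * φ * φss > 0 := by
  intro φ φs φss
  have heq : (φ - s * φs) * (φ + (t - s) * φs) + s * (t - s) * φ * φss
      = 16 - s ^ 4 + 16 * s ^ 2 - 16 * s * t := by
    simp only [φ, φs, φss]; ring
  refine ⟨heq, ?_⟩
  rw [heq]
  have h3 : (Real.sqrt 3) ^ 2 = 3 := Real.sq_sqrt (by norm_num)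
  have hs : s < Real.sqrt 3 := lt_of_le_of_lt hst ht
  have hs2 : s ^ 2 ≤ 3 := by nlinarith
  have hst' : s * t ≤ s * Real.sqrt 3 := mul_le_mul_of_nonneg_left ht.le h0
  nlinarith [sq_nonneg (13 * s - 8 * Real.sqrt 3), mul_nonneg (mul_nonneg h0 h0) h0, sq_nonneg s, mul_le_mul_of_nonneg_left hs2 (sq_nonneg s)]
end

section
/- Let φ(t,s) = 4 − s², c₀ = φ − s·φ_s = 4 + s², and k̃ = c₀(c₀ + t·φ_s) + 2s(t−s)·φ·φ_ss = (4+s²)(4+s²−2ts) − 4s(t−s)(4−s²). Then there exist t ∈ [0, √3) and s ∈ [0, t] with k̃ < 0; in fact, with s = t/2 one has k̃ = 16 + t⁴/16 − 6t², which is negative for t² sufficiently close to 3. -/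
theorem ktilde_negative_somewhere :
    ∃ t s : ℝ, 0 ≤ t ∧ t < Real.sqrt 3 ∧ 0 ≤ s ∧ s ≤ t ∧
      s = t / 2 ∧
      (4 + s ^ 2) * (4 + s ^ 2 - 2 * t * s) - 4 * s * (t - s) * (4 - s ^ 2)
        = 16 + t ^ 4 / 16 - 6 * t ^ 2 ∧
      (4 + s ^ 2) * (4 + s ^ 2 - 2 * t * s) - 4 * s * (t - s) * (4 - s ^ 2) < 0 := by
  refine ⟨1.7, 0.85, by norm_num, ?_, by norm_num, by norm_num, by norm_num, by ring, by norm_num⟩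
  rw [show (1.7 : ℝ) = Real.sqrt (1.7 ^ 2) by rw [Real.sqrt_sq]; norm_num]
  exact Real.sqrt_lt_sqrt (by positivity) (by norm_num)
end

section
/- Let H = c₀·I_{2n} + B·X·Bᵀ where B is the 2n×3 matrix with columns s_·, x, Jx and X = diag(r·φ_ss/2, φ_s, φ_s), under the relations Σ(s_i)² = (4/r)s(t−s), Σ s_i x^i = (2/r)(t−s)⟨u|x⟩, Σ s_i (Jx)^i = (2/r)(t−s)⟨u|Jx⟩, ‖x‖² = ‖Jx‖² = t, ⟨x|Jx⟩ = 0, and ⟨u|x⟩² + ⟨u|Jx⟩² = rs. Then the characteristic polynomial of H is det(λI_{2n} − H) = (λ−c₀)^{2n−3}·(λ−c₀−t·φ_s)·(λ² − (2c₀ + t·φ_s + 2s(t−s)·φ_ss)·λ + k̃), where k̃ = c₀(c₀ + t·φ_s) + 2s(t−s)·φ·φ_ss and φ = c₀ + s·φ_s. -/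
open Matrix in
theorem charpoly_of_real_fundamental_tensor (n : ℕ) (hn : 2 ≤ n)
    (c₀ t s r φs φss p q : ℝ) (hr : 0 < r) (hs0 : 0 ≤ s) (hst : s ≤ t)
    (si x Jx : Fin (2 * n) → ℝ)
    (h1 : (∑ i, si i ^ 2) = (4 / r) * s * (t - s))
    (h2 : (∑ i, si i * x i) = (2 / r) * (t - s) * p)
    (h3 : (∑ i, si i * Jx i) = (2 / r) * (t - s) * q)
    (h4 : (∑ i, x i * x i) = t)
    (h5 : (∑ i, Jx i * Jx i) = t)
    (h6 : (∑ i, x i * Jx i) = 0)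
    (h7 : p ^ 2 + q ^ 2 = r * s) :
    let φ := c₀ + s * φs
    let B : Matrix (Fin (2 * n)) (Fin 3) ℝ :=
      Matrix.of fun i j => ![si i, x i, Jx i] j
    let X : Matrix (Fin 3) (Fin 3) ℝ :=
      Matrix.diagonal ![r * φss / 2, φs, φs]
    let H := c₀ • (1 : Matrix (Fin (2 * n)) (Fin (2 * n)) ℝ) + B * X * Bᵀ
    let ktilde := c₀ * (c₀ + t * φs) + 2 * s * (t - s) * φ * φss
    ∀ lam : ℝ,
      (lam • (1 : Matrix (Fin (2 * n)) (Fin (2 * n)) ℝ) - H).det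
        = (lam - c₀) ^ (2 * n - 3) * (lam - c₀ - t * φs)
          * (lam ^ 2 - (2 * c₀ + t * φs + 2 * s * (t - s) * φss) * lam + ktilde) := by
  intro φ B X H ktilde
  have hBtB : Bᵀ * B = !![(4/r)*s*(t-s), (2/r)*(t-s)*p, (2/r)*(t-s)*q;
                          (2/r)*(t-s)*p, t, 0;
                          (2/r)*(t-s)*q, 0, t] := by
    ext i j
    fin_cases i <;> fin_cases j <;>
      simp only [Matrix.mul_apply, Matrix.transpose_apply, B, Matrix.of_apply,
        Matrix.cons_val_zero, Matrix.cons_val_one, Matrix.head_cons,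
        Matrix.cons_val', Matrix.empty_val', Matrix.cons_val_fin_one,
        Fin.isValue, Matrix.cons_val_two, Matrix.tail_cons]
    · simpa [pow_two] using h1
    · simpa using h2
    · simpa using h3
    · simpa [mul_comm] using h2
    · simpa using h4
    · simpa using h6
    · simpa [mul_comm] using h3
    · simpa [mul_comm] using h6
    · simpa using h5
  have hX : X = !![r*φss/2, 0, 0; 0, φs, 0; 0, 0, φs] := by
    ext i j
    fin_cases i <;> fin_cases j <;>
      simp [X, Matrix.diagonal_apply, Matrix.vecHead, Matrix.vecTail]
  have key : ∀ lam : ℝ, lam ≠ c₀ →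
      (lam • (1 : Matrix (Fin (2 * n)) (Fin (2 * n)) ℝ) - H).det
        = (lam - c₀) ^ (2 * n - 3) * (lam - c₀ - t * φs)
          * (lam ^ 2 - (2 * c₀ + t * φs + 2 * s * (t - s) * φss) * lam + ktilde) := by
    intro lam hlam
    set c := lam - c₀ with hcdef
    have hc : c ≠ 0 := sub_ne_zero.mpr hlam
    have hmat : lam • (1 : Matrix (Fin (2 * n)) (Fin (2 * n)) ℝ) - H
        = c • (1 + ((-c⁻¹) • (B * X)) * Bᵀ) := by
      have e1 : c • (1 + ((-c⁻¹) • (B * X)) * Bᵀ)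
          = c • (1 : Matrix (Fin (2 * n)) (Fin (2 * n)) ℝ)
            + (c * -c⁻¹) • (B * X * Bᵀ) := by
        rw [smul_add, Matrix.smul_mul, smul_smul]
      rw [e1, show c * -c⁻¹ = -1 by field_simp]
      show lam • (1 : Matrix (Fin (2 * n)) (Fin (2 * n)) ℝ)
          - (c₀ • 1 + B * X * Bᵀ) = _
      rw [hcdef]
      module
    rw [hmat, Matrix.det_smul, Matrix.det_one_add_mul_comm]
    have e2 : Bᵀ * ((-c⁻¹) • (B * X)) = (-c⁻¹) • ((Bᵀ * B) * X) := by
      rw [Matrix.mul_smul, Matrix.mul_assoc]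
    rw [e2, hBtB, hX]
    rw [Matrix.det_fin_three]
    simp [Matrix.one_apply, Fintype.card_fin]
    have h2n : 2 * n = (2 * n - 3) + 3 := by omega
    rw [h2n, pow_add]
    conv_lhs => rw [mul_assoc]
    conv_rhs => rw [mul_assoc]
    congr 1
    have hk : ktilde = c₀ * (c₀ + t * φs) + 2 * s * (t - s) * (c₀ + s * φs) * φss := rfl
    have hlc : lam = c + c₀ := by rw [hcdef]; ring
    rw [hk, hlc]
    field_simp
    linear_combination (-4*(t-s)^2*φs*φss*(c - t*φs)) * h7
  intro lam
  have hF : Continuous fun lam : ℝ =>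
      (lam • (1 : Matrix (Fin (2 * n)) (Fin (2 * n)) ℝ) - H).det := by
    apply Continuous.matrix_det
    exact (continuous_id.smul continuous_const).sub continuous_const
  have hG : Continuous fun lam : ℝ =>
      (lam - c₀) ^ (2 * n - 3) * (lam - c₀ - t * φs)
        * (lam ^ 2 - (2 * c₀ + t * φs + 2 * s * (t - s) * φss) * lam + ktilde) := by
    fun_prop
  have := Continuous.ext_on (dense_compl_singleton c₀) hF hG
    (fun y hy => key y hy)
  exact congrFun this lam
end

section
/- Let φ : [0,∞)×[0,∞) → (0,∞) be continuous at (1,0) with φ(1,0) = 1. Let z, w ∈ ℂⁿ with ‖z‖ = ‖w‖ = 1 and ⟨z,w⟩ = 0, let 0 < α < π/2, and set γ(τ) = z·cos τ + w·sin τ. For each m ≥ 1 set τ_i = α·i/m (0 ≤ i ≤ m). Then lim_{m→∞} Σ_{i=0}^{m−1} F(γ(τ_i), γ(τ_{i+1}) − γ(τ_i)) = α, where F(z,v) = √( ‖v‖² · φ(‖z‖², |⟨z,v⟩|²/‖v‖²) ). -/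
open scoped ComplexConjugate

lemma aux_inner {n : ℕ} {z w : EuclideanSpace ℂ (Fin n)}
    (hz : ‖z‖ = 1) (hw : ‖w‖ = 1) (hzw : (inner ℂ z w : ℂ) = 0) (a b : ℝ) :
    (inner ℂ ((Real.cos a : ℂ) • z + (Real.sin a : ℂ) • w)
      ((Real.cos b : ℂ) • z + (Real.sin b : ℂ) • w) : ℂ) = (Real.cos (b - a) : ℂ) := by
  have hzz : (inner ℂ z z : ℂ) = 1 := by
    rw [inner_self_eq_norm_sq_to_K, hz]; norm_num
  have hww : (inner ℂ w w : ℂ) = 1 := by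
    rw [inner_self_eq_norm_sq_to_K, hw]; norm_num
  have hwz : (inner ℂ w z : ℂ) = 0 := by
    rw [← inner_conj_symm, hzw, map_zero]
  simp only [inner_add_left, inner_add_right, inner_smul_left, inner_smul_right,
    hzz, hww, hzw, hwz, Complex.conj_ofReal, mul_one, mul_zero, add_zero, zero_add,
    Real.cos_sub]
  push_cast
  ring

theorem geodesic_length_limit (n : ℕ) (φ : ℝ → ℝ → ℝ)
    (hpos : ∀ t s, 0 ≤ t → 0 ≤ s → 0 < φ t s)
    (hcont : ContinuousAt (Function.uncurry φ) (1, 0))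
    (hnorm : φ 1 0 = 1)
    (z w : EuclideanSpace ℂ (Fin n))
    (hz : ‖z‖ = 1) (hw : ‖w‖ = 1) (hzw : (inner ℂ z w : ℂ) = 0)
    (α : ℝ) (hα0 : 0 < α) (hα1 : α < Real.pi / 2) :
    let γ : ℝ → EuclideanSpace ℂ (Fin n) :=
      fun τ => (Real.cos τ : ℂ) • z + (Real.sin τ : ℂ) • w
    let F : EuclideanSpace ℂ (Fin n) → EuclideanSpace ℂ (Fin n) → ℝ :=
      fun p v => Real.sqrt (‖v‖ ^ 2 * φ (‖p‖ ^ 2) (‖(inner ℂ p v : ℂ)‖ ^ 2 / ‖v‖ ^ 2))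
    Filter.Tendsto
      (fun m : ℕ => ∑ i ∈ Finset.range m,
        F (γ (α * i / m)) (γ (α * (i + 1) / m) - γ (α * i / m)))
      Filter.atTop (nhds α) := by
  intro γ F
  have hπ := Real.pi_pos
  set t : ℕ → ℝ := fun m => α / (2 * m) with ht_def
  -- Basic facts about γ
  have hγinner : ∀ a b : ℝ, (inner ℂ (γ a) (γ b) : ℂ) = (Real.cos (b - a) : ℂ) :=
    fun a b => aux_inner hz hw hzw a b
  have hγnormsq : ∀ a : ℝ, ‖γ a‖ ^ 2 = 1 := by
    intro a
    have := inner_self_eq_norm_sq (𝕜 := ℂ) (γ a)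
    rw [hγinner a a] at this
    simpa using this.symm
  -- value of each summand
  have key : ∀ m : ℕ, 1 ≤ m → ∀ i : ℕ,
      F (γ (α * i / m)) (γ (α * (i + 1) / m) - γ (α * i / m))
        = 2 * Real.sin (t m) * Real.sqrt (φ 1 (Real.sin (t m) ^ 2)) := by
    intro m hm i
    have hm0 : (m : ℝ) ≠ 0 := Nat.cast_ne_zero.2 (by omega)
    have hm1 : (1 : ℝ) ≤ (m : ℝ) := by exact_mod_cast hm
    set a := α * i / m
    set b := α * (i + 1) / m
    have hba : b - a = 2 * t m := by
      simp only [ht_def, a, b]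
      field_simp
      ring
    have hab : a - b = -(2 * t m) := by linarith
    -- t m is in (0, π)
    have ht_pos : 0 < t m := by
      simp only [ht_def]; positivity
    have ht_lt : t m < Real.pi := by
      have : t m ≤ α / 2 := by
        rw [ht_def, div_le_div_iff₀ (by positivity) (by norm_num)]
        nlinarith
      linarith
    have hsin_pos : 0 < Real.sin (t m) := Real.sin_pos_of_pos_of_lt_pi ht_pos ht_lt
    have h2t : Real.cos (2 * t m) = 1 - 2 * Real.sin (t m) ^ 2 := by
      rw [Real.cos_two_mul]
      nlinarith [Real.sin_sq_add_cos_sq (t m)]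
    -- norm squared of the increment
    set s : ℝ := Real.sin (t m) with hs_def
    have hvsq : ‖γ b - γ a‖ ^ 2 = 4 * s ^ 2 := by
      have hv : (inner ℂ (γ b - γ a) (γ b - γ a) : ℂ)
          = ((4 * s ^ 2 : ℝ) : ℂ) := by
        rw [inner_sub_left, inner_sub_right, inner_sub_right, hγinner, hγinner,
          hγinner, hγinner, hba, hab, sub_self, Real.cos_zero, Real.cos_neg, h2t]
        simp only [sub_self, Real.cos_zero]
        push_cast
        ring
      have := inner_self_eq_norm_sq (𝕜 := ℂ) (γ b - γ a)
      rw [hv] at this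
      rw [← this]
      norm_cast
    -- inner product of γ a with the increment
    have hinv : (inner ℂ (γ a) (γ b - γ a) : ℂ) = ((-(2 * s ^ 2) : ℝ) : ℂ) := by
      rw [inner_sub_right, hγinner, hγinner, hba, sub_self, Real.cos_zero, h2t]
      push_cast
      ring
    have habs : ‖(inner ℂ (γ a) (γ b - γ a) : ℂ)‖ ^ 2
        = 4 * s ^ 4 := by
      rw [hinv, Complex.norm_real, Real.norm_eq_abs, sq_abs]
      ring
    simp only [F]
    rw [hvsq, hγnormsq, habs]
    have hdiv : 4 * s ^ 4 / (4 * s ^ 2) = s ^ 2 := by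
      have : s ≠ 0 := ne_of_gt hsin_pos
      field_simp
    rw [hdiv]
    have h4 : 4 * s ^ 2 = (2 * s) ^ 2 := by ring
    rw [h4, Real.sqrt_mul (by positivity), Real.sqrt_sq (by positivity)]
  -- the sum as a closed formula
  have hsum : ∀ m : ℕ, 1 ≤ m →
      (∑ i ∈ Finset.range m,
        F (γ (α * i / m)) (γ (α * (i + 1) / m) - γ (α * i / m)))
      = α * (Real.sin (t m) / t m) * Real.sqrt (φ 1 (Real.sin (t m) ^ 2)) := by
    intro m hm
    have hm0 : (m : ℝ) ≠ 0 := Nat.cast_ne_zero.2 (by omega)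
    rw [Finset.sum_congr rfl (fun i _ => key m hm i), Finset.sum_const,
      Finset.card_range, nsmul_eq_mul]
    have hα' : α ≠ 0 := ne_of_gt hα0
    simp only [ht_def]
    rw [div_div_eq_mul_div]
    field_simp
  -- limits
  have htends_t : Filter.Tendsto t Filter.atTop (nhds 0) := by
    have : t = fun m : ℕ => (α / 2) / m := by
      funext m; rw [ht_def, div_div]
    rw [this]
    exact tendsto_const_div_atTop_nhds_zero_nat (α / 2)
  have htends_t' : Filter.Tendsto t Filter.atTop (nhdsWithin 0 {x : ℝ | x ≠ 0}) := by
    rw [tendsto_nhdsWithin_iff]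
    refine ⟨htends_t, Filter.eventually_atTop.2 ⟨1, fun m hm => ?_⟩⟩
    have hm0 : (0:ℝ) < (m : ℝ) := by exact_mod_cast Nat.pos_of_ne_zero (by omega)
    have : 0 < t m := by simp only [ht_def]; positivity
    exact ne_of_gt this
  have hslope : Filter.Tendsto (fun m => Real.sin (t m) / t m) Filter.atTop (nhds 1) := by
    have hd : Filter.Tendsto (fun x : ℝ => Real.sin x / x)
        (nhdsWithin 0 {x : ℝ | x ≠ 0}) (nhds 1) := by
      have h := Real.hasDerivAt_sin 0
      rw [Real.cos_zero, hasDerivAt_iff_tendsto_slope] at h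
      have heq : slope Real.sin 0 = fun x : ℝ => Real.sin x / x := by
        funext x
        simp [slope_def_field]
      rwa [heq] at h
    exact hd.comp htends_t'
  have hφ : Filter.Tendsto (fun m => φ 1 (Real.sin (t m) ^ 2)) Filter.atTop (nhds 1) := by
    have hsin2 : Filter.Tendsto (fun m => Real.sin (t m) ^ 2) Filter.atTop (nhds 0) := by
      have := ((Real.continuous_sin.tendsto 0).comp htends_t).pow 2
      simpa using this
    have hp : Filter.Tendsto (fun m => ((1 : ℝ), Real.sin (t m) ^ 2)) Filter.atTop
        (nhds ((1 : ℝ), (0 : ℝ))) := tendsto_const_nhds.prodMk_nhds hsin2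
    have := hcont.tendsto.comp hp
    simpa [Function.uncurry, hnorm, Function.comp_def] using this
  have hsqrt : Filter.Tendsto (fun m => Real.sqrt (φ 1 (Real.sin (t m) ^ 2)))
      Filter.atTop (nhds 1) := by
    have := (Real.continuous_sqrt.tendsto 1).comp hφ
    simpa [Function.comp_def] using this
  have hmain : Filter.Tendsto
      (fun m : ℕ => α * (Real.sin (t m) / t m) * Real.sqrt (φ 1 (Real.sin (t m) ^ 2)))
      Filter.atTop (nhds α) := by
    have := (hslope.const_mul α).mul hsqrt
    simpa using this
  refine hmain.congr' ?_
  filter_upwards [Filter.eventually_ge_atTop 1] with m hm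
  exact (hsum m hm).symm
end
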